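/- Let U ⊆ V and i ∈ V, and let x be the recursive max-linear values on 𝒟 for any z ∈ [0,∞)^d. Then max_{j ∈ An(i)∩U} (b_{ji}/b_{jj}) x_j = max_{j ∈ An_low^U(i)} (b_{ji}/b_{jj}) x_j, and min_{l ∈ De(i)∩U} (b_{ii}/b_{il}) x_l = min_{l ∈ De_high^U(i)} (b_{ii}/b_{il}) x_l, where the maximum over the empty set is 0 and the minimum over the empty set is +∞. -/

import Mathlib

open scoped NNReal ENNReal Classical

namespace MaxLinearDAG

variable {d : ℕ}

/-- `p` is a directed path (with at least one edge) from `j` to `i` in the edge relation `E`. -/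
def PathFrom (E : Fin d → Fin d → Prop) (j i : Fin d) (p : List (Fin d)) : Prop :=
  2 ≤ p.length ∧ p.head? = some j ∧ p.getLast? = some i ∧ List.Chain' E p

/-- The directed graph given by `E` is acyclic: no directed path from a node to itself. -/
def Acyclic (E : Fin d → Fin d → Prop) : Prop :=
  ∀ i, ¬ ∃ p, PathFrom E i i p

/-- `j` is an ancestor of `i`: there is a path from `j` to `i`. -/
def anc (E : Fin d → Fin d → Prop) (j i : Fin d) : Prop :=
  ∃ p, PathFrom E j i p

/-- The weight of a path `p` starting at `j`: `c j j` times the product of the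
edge weights along `p`. -/
noncomputable def pathWeight (c : Fin d → Fin d → ℝ≥0) (j : Fin d) (p : List (Fin d)) : ℝ≥0 :=
  c j j * ((p.zip p.tail).map fun q => c q.1 q.2).prod

/-- `b` is the max-linear coefficient matrix of the recursive ML model on `(E, c)`:
for `j ∈ an(i)`, `b j i` is the (attained) maximum of the path weights over all paths
from `j` to `i`; `b i i = c i i`; and `b j i = 0` for `j ∉ An(i)`. -/
def IsMLMatrix (E : Fin d → Fin d → Prop) (c b : Fin d → Fin d → ℝ≥0) : Prop :=
  (∀ i, b i i = c i i) ∧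
  (∀ j i, j ≠ i → ¬ anc E j i → b j i = 0) ∧
  (∀ j i p, PathFrom E j i p → pathWeight c j p ≤ b j i) ∧
  (∀ j i, anc E j i → ∃ p, PathFrom E j i p ∧ pathWeight c j p = b j i)

/-- `x` is the vector of recursive max-linear values on `(E, c)` for noise `z`:
`x i = max (max_{k ∈ pa(i)} c k i * x k) (c i i * z i)`, empty max being `0`. -/
def IsRecML (E : Fin d → Fin d → Prop) (c : Fin d → Fin d → ℝ≥0) (z x : Fin d → ℝ≥0) : Prop :=
  ∀ i, x i = (Finset.univ.sup fun k => if E k i then c k i * x k else 0) ⊔ c i i * z i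

/-- Max-times matrix product `F ⊙ G`. -/
noncomputable def mprod (F G : Fin d → Fin d → ℝ≥0) : Fin d → Fin d → ℝ≥0 :=
  fun i j => Finset.univ.sup fun k => F i k * G k j

/-- Max-times matrix power, `mpow A 0` being the identity matrix. -/
noncomputable def mpow (A : Fin d → Fin d → ℝ≥0) : ℕ → Fin d → Fin d → ℝ≥0
  | 0 => fun i j => if i = j then 1 else 0
  | n + 1 => mprod (mpow A n) A

/-- `p` is a max-weighted path from `j` to `i`. -/
def MaxWeighted (E : Fin d → Fin d → Prop) (c b : Fin d → Fin d → ℝ≥0)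
    (j i : Fin d) (p : List (Fin d)) : Prop :=
  PathFrom E j i p ∧ pathWeight c j p = b j i

/-- The lowest max-weighted ancestors of `i` in `U`: nodes `j ∈ An(i) ∩ U` such that no
max-weighted path from `j` to `i` passes through a node of `U \ {j}`. -/
def AnLow (E : Fin d → Fin d → Prop) (c b : Fin d → Fin d → ℝ≥0)
    (U : Set (Fin d)) (i : Fin d) : Set (Fin d) :=
  {j | (anc E j i ∨ j = i) ∧ j ∈ U ∧
    ∀ p, MaxWeighted E c b j i p → ¬ ∃ u ∈ U \ {j}, u ∈ p}

/-- The highest max-weighted descendants of `i` in `U`: nodes `l ∈ De(i) ∩ U` such that no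
max-weighted path from `i` to `l` passes through a node of `U \ {l}`. -/
def DeHigh (E : Fin d → Fin d → Prop) (c b : Fin d → Fin d → ℝ≥0)
    (U : Set (Fin d)) (i : Fin d) : Set (Fin d) :=
  {l | (anc E i l ∨ l = i) ∧ l ∈ U ∧
    ∀ p, MaxWeighted E c b i l p → ¬ ∃ u ∈ U \ {l}, u ∈ p}

/-! ### Auxiliary machinery -/

/-- The product of edge weights along a list of nodes. -/
noncomputable def eW (c : Fin d → Fin d → ℝ≥0) (p : List (Fin d)) : ℝ≥0 :=
  ((p.zip p.tail).map fun q => c q.1 q.2).prod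

lemma eW_nil (c : Fin d → Fin d → ℝ≥0) : eW c [] = 1 := by simp [eW]

lemma eW_single (c : Fin d → Fin d → ℝ≥0) (a : Fin d) : eW c [a] = 1 := by simp [eW]

lemma eW_cons₂ (c : Fin d → Fin d → ℝ≥0) (a b : Fin d) (t : List (Fin d)) :
    eW c (a :: b :: t) = c a b * eW c (b :: t) := by
  simp [eW]

lemma pathWeight_eq_eW (c : Fin d → Fin d → ℝ≥0) (j : Fin d) (p : List (Fin d)) :
    pathWeight c j p = c j j * eW c p := rfl

lemma eW_pos {E : Fin d → Fin d → Prop} {c : Fin d → Fin d → ℝ≥0}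
    (hce : ∀ k i, E k i → 0 < c k i) :
    ∀ p : List (Fin d), List.Chain' E p → 0 < eW c p
  | [], _ => by simp [eW_nil]
  | [a], _ => by simp [eW_single]
  | a :: b :: t, h => by
      rw [eW_cons₂]
      rcases List.isChain_cons_cons.mp h with ⟨h1, h2⟩
      exact mul_pos (hce _ _ h1) (eW_pos hce (b :: t) h2)

lemma edge_le_x {E : Fin d → Fin d → Prop} {c : Fin d → Fin d → ℝ≥0} {z x : Fin d → ℝ≥0}
    (hx : IsRecML E c z x) {k i : Fin d} (h : E k i) : c k i * x k ≤ x i := by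
  rw [hx i]
  refine le_trans ?_ le_sup_left
  have := Finset.le_sup (f := fun k => if E k i then c k i * x k else 0) (Finset.mem_univ k)
  simpa [if_pos h] using this

/-- Along any path from `j` to `i`, `eW p * x j ≤ x i`. -/
lemma eW_mul_le_x {E : Fin d → Fin d → Prop} {c : Fin d → Fin d → ℝ≥0} {z x : Fin d → ℝ≥0}
    (hx : IsRecML E c z x) :
    ∀ (p : List (Fin d)) (j i : Fin d), p.head? = some j → p.getLast? = some i →
      List.Chain' E p → eW c p * x j ≤ x i
  | [], j, i, hh, _, _ => by simp at hh
  | [a], j, i, hh, hl, _ => by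
      simp only [List.head?_cons, Option.some.injEq] at hh
      simp only [List.getLast?_singleton, Option.some.injEq] at hl
      subst hh; subst hl
      simp [eW_single]
  | a :: b :: t, j, i, hh, hl, hc => by
      simp only [List.head?_cons, Option.some.injEq] at hh
      subst hh
      rcases List.isChain_cons_cons.mp hc with ⟨h1, h2⟩
      have hrec := eW_mul_le_x hx (b :: t) b i rfl (by simpa using hl) h2
      calc eW c (a :: b :: t) * x a = eW c (b :: t) * (c a b * x a) := by
            rw [eW_cons₂]; ring
        _ ≤ eW c (b :: t) * x b := mul_le_mul_right (edge_le_x hx h1) _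
        _ ≤ x i := hrec

lemma eW_split (c : Fin d → Fin d → ℝ≥0) :
    ∀ (s : List (Fin d)) (u : Fin d) (t : List (Fin d)),
      eW c (s ++ u :: t) = eW c (s ++ [u]) * eW c (u :: t)
  | [], u, t => by simp [eW_single]
  | [a], u, t => by simp [eW_cons₂, eW_single]
  | a :: b :: s, u, t => by
      have ih := eW_split c (b :: s) u t
      simp only [List.cons_append] at ih ⊢
      rw [eW_cons₂, eW_cons₂, ih]
      ring

lemma anc_trans {E : Fin d → Fin d → Prop} {j k i : Fin d}
    (h1 : anc E j k) (h2 : anc E k i) : anc E j i := by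
  obtain ⟨p, hp1, hp2, hp3, hp4⟩ := h1
  obtain ⟨q, hq1, hq2, hq3, hq4⟩ := h2
  obtain ⟨a, q', rfl⟩ : ∃ a q', q = a :: q' := by
    cases q with
    | nil => simp at hq1
    | cons a q' => exact ⟨a, q', rfl⟩
  simp only [List.head?_cons, Option.some.injEq] at hq2
  subst hq2
  have hq' : q' ≠ [] := by
    rintro rfl; simp at hq1
  have hpne : p ≠ [] := by
    rintro rfl; simp at hp1
  refine ⟨p ++ q', ?_, ?_, ?_, ?_⟩
  · rw [List.length_append]; omega
  · rw [List.head?_append_of_ne_nil _ hpne]; exact hp2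
  · rw [List.getLast?_append_of_ne_nil _ hq']
    rwa [show a :: q' = [a] ++ q' from rfl, List.getLast?_append_of_ne_nil _ hq'] at hq3
  · rcases List.isChain_cons.mp hq4 with ⟨hlink, hq4'⟩
    refine List.IsChain.append hp4 hq4' ?_
    intro w hw y hy
    rw [hp3] at hw
    have hwa : a = w := by simpa using hw
    subst hwa
    exact hlink y hy

lemma path_split {E : Fin d → Fin d → Prop} (c : Fin d → Fin d → ℝ≥0) {j i u : Fin d}
    {p : List (Fin d)} (hp : PathFrom E j i p) (hu : u ∈ p) (huj : u ≠ j) (hui : u ≠ i) :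
    ∃ p₁ p₂, PathFrom E j u p₁ ∧ PathFrom E u i p₂ ∧ eW c p = eW c p₁ * eW c p₂ := by
  obtain ⟨s, t, rfl⟩ := List.append_of_mem hu
  obtain ⟨h2, hh, hl, hc⟩ := hp
  have hs : s ≠ [] := by
    rintro rfl
    simp only [List.nil_append, List.head?_cons, Option.some.injEq] at hh
    exact huj hh
  have ht : t ≠ [] := by
    rintro rfl
    rw [show s ++ [u] = s ++ [u] from rfl, List.getLast?_concat] at hl
    exact hui (Option.some.inj hl)
  obtain ⟨a, s', rfl⟩ := List.exists_cons_of_ne_nil hs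
  have haj : a = j := by
    simpa using hh
  subst haj
  obtain ⟨v, t', rfl⟩ := List.exists_cons_of_ne_nil ht
  have hassoc : (a :: s') ++ u :: v :: t' = ((a :: s') ++ [u]) ++ (v :: t') := by simp
  rw [hassoc] at hc
  rcases List.isChain_append.mp hc with ⟨hc1, hc2, hlink⟩
  have hEuv : E u v := by
    have := hlink u (by rw [List.getLast?_concat]; rfl) v rfl
    exact this
  refine ⟨(a :: s') ++ [u], u :: v :: t', ⟨?_, ?_, ?_, hc1⟩, ⟨?_, rfl, ?_, ?_⟩, ?_⟩
  · rw [List.length_append]; simp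
  · rfl
  · exact List.getLast?_concat
  · simp
  · rw [hassoc] at hl
    rw [List.getLast?_append_of_ne_nil _ (l₂ := v :: t') (by simp)] at hl
    simpa using hl
  · exact List.isChain_cons_cons.mpr ⟨hEuv, hc2⟩
  · exact eW_split c (a :: s') u (v :: t')

section Claims

variable {E : Fin d → Fin d → Prop} {c b : Fin d → Fin d → ℝ≥0} {z x : Fin d → ℝ≥0}

lemma claim1 (hE : Acyclic E) (hcd : ∀ i, 0 < c i i) (hce : ∀ k i, E k i → 0 < c k i)
    (hb : IsMLMatrix E c b) (U : Set (Fin d)) (i : Fin d) (hx : IsRecML E c z x) :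
    ∀ j, (anc E j i ∨ j = i) → j ∈ U →
      ∃ j', j' ∈ AnLow E c b U i ∧ (b j i / b j j) * x j ≤ (b j' i / b j' j') * x j' := by
  have hwf : WellFounded (fun a b' : Fin d => anc E b' a) := by
    haveI : IsTrans (Fin d) (fun a b' => anc E b' a) := ⟨fun a b' c' h1 h2 => anc_trans h2 h1⟩
    haveI : IsIrrefl (Fin d) (fun a b' => anc E b' a) := ⟨fun a h => hE a h⟩
    exact Finite.wellFounded_of_trans_of_irrefl _
  intro j
  induction j using hwf.induction with
  | _ j IH =>
  intro hAn hU
  rcases hAn with hanc | rfl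
  · by_cases hj : j ∈ AnLow E c b U i
    · exact ⟨j, hj, le_rfl⟩
    · have hex : ∃ p, MaxWeighted E c b j i p ∧ ∃ u ∈ U \ {j}, u ∈ p := by
        simp only [AnLow, Set.mem_setOf_eq, not_and, not_forall, not_not] at hj
        obtain ⟨p, hp, hp2⟩ := hj (Or.inl hanc) hU
        exact ⟨p, hp, hp2⟩
      obtain ⟨p, hmw, u, huU, hup⟩ := hex
      have huj : u ≠ j := by
        have := huU.2; simpa using this
      obtain ⟨hpPath, hpw⟩ := hmw
      have hbjj : b j j = c j j := hb.1 j
      by_cases hui : u = i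
      · subst hui
        refine ⟨u, ⟨Or.inr rfl, huU.1, fun q hq => absurd ⟨q, hq.1⟩ (hE u)⟩, ?_⟩
        have hbii : b u u = c u u := hb.1 u
        rw [hbii]
        rw [div_self (hcd u).ne', one_mul, hbjj]
        rw [div_mul_eq_mul_div, div_le_iff₀ (hcd j)]
        have hL := eW_mul_le_x hx p j u hpPath.2.1 hpPath.2.2.1 hpPath.2.2.2
        have hbji : b j u = c j j * eW c p := by rw [← hpw, pathWeight_eq_eW]
        calc b j u * x j = (eW c p * x j) * c j j := by rw [hbji]; ring
          _ ≤ x u * c j j := mul_le_mul_left hL _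
      · obtain ⟨p₁, p₂, hp₁, hp₂, hW⟩ := path_split c hpPath hup huj hui
        obtain ⟨j', hj', hle⟩ := IH u ⟨p₁, hp₁⟩ (Or.inl ⟨p₂, hp₂⟩) huU.1
        refine ⟨j', hj', le_trans ?_ hle⟩
        have hbuu : b u u = c u u := hb.1 u
        rw [hbjj, hbuu, div_mul_eq_mul_div, div_mul_eq_mul_div,
          div_le_div_iff₀ (hcd j) (hcd u)]
        have hbji : b j i = c j j * (eW c p₁ * eW c p₂) := by rw [← hpw, pathWeight_eq_eW, hW]
        have hxu : eW c p₁ * x j ≤ x u := eW_mul_le_x hx p₁ j u hp₁.2.1 hp₁.2.2.1 hp₁.2.2.2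
        have hbui : c u u * eW c p₂ ≤ b u i := hb.2.2.1 u i p₂ hp₂
        calc b j i * x j * c u u = (c u u * eW c p₂) * (eW c p₁ * x j) * c j j := by
              rw [hbji]; ring
          _ ≤ b u i * x u * c j j :=
              mul_le_mul_left (mul_le_mul hbui hxu zero_le zero_le) _
  · refine ⟨j, ⟨Or.inr rfl, hU, fun q hq => absurd ⟨q, hq.1⟩ (hE j)⟩, le_rfl⟩

lemma claim2 (hE : Acyclic E) (hcd : ∀ i, 0 < c i i) (hce : ∀ k i, E k i → 0 < c k i)
    (hb : IsMLMatrix E c b) (U : Set (Fin d)) (i : Fin d) (hx : IsRecML E c z x) :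
    ∀ l, (anc E i l ∨ l = i) → l ∈ U →
      ∃ l', l' ∈ DeHigh E c b U i ∧ (b i i / b i l') * x l' ≤ (b i i / b i l) * x l := by
  have hwf : WellFounded (fun a b' : Fin d => anc E a b') := by
    haveI : IsTrans (Fin d) (fun a b' => anc E a b') := ⟨fun a b' c' h1 h2 => anc_trans h1 h2⟩
    haveI : IsIrrefl (Fin d) (fun a b' => anc E a b') := ⟨fun a h => hE a h⟩
    exact Finite.wellFounded_of_trans_of_irrefl _
  intro l
  induction l using hwf.induction with
  | _ l IH =>
  intro hDe hU
  have hbii : b i i = c i i := hb.1 i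
  rcases hDe with hanc | rfl
  · by_cases hl : l ∈ DeHigh E c b U i
    · exact ⟨l, hl, le_rfl⟩
    · have hex : ∃ p, MaxWeighted E c b i l p ∧ ∃ u ∈ U \ {l}, u ∈ p := by
        simp only [DeHigh, Set.mem_setOf_eq, not_and, not_forall, not_not] at hl
        obtain ⟨p, hp, hp2⟩ := hl (Or.inl hanc) hU
        exact ⟨p, hp, hp2⟩
      obtain ⟨p, hmw, u, huU, hup⟩ := hex
      have hul : u ≠ l := by
        have := huU.2; simpa using this
      obtain ⟨hpPath, hpw⟩ := hmw
      have hWp : 0 < eW c p := eW_pos hce p hpPath.2.2.2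
      have hbil : b i l = c i i * eW c p := by rw [← hpw, pathWeight_eq_eW]
      have hbilpos : 0 < b i l := by rw [hbil]; exact mul_pos (hcd i) hWp
      by_cases hui : u = i
      · subst hui
        refine ⟨u, ⟨Or.inr rfl, huU.1, fun q hq => absurd ⟨q, hq.1⟩ (hE u)⟩, ?_⟩
        rw [show b u u = c u u from hb.1 u, div_self (hcd u).ne', one_mul]
        rw [div_mul_eq_mul_div, le_div_iff₀ hbilpos]
        have hL := eW_mul_le_x hx p u l hpPath.2.1 hpPath.2.2.1 hpPath.2.2.2
        calc x u * b u l = c u u * (eW c p * x u) := by rw [hbil]; ring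
          _ ≤ c u u * x l := mul_le_mul_right hL _
      · obtain ⟨p₁, p₂, hp₁, hp₂, hW⟩ := path_split c hpPath hup (Ne.symm (fun h => hui h.symm)) hul
        obtain ⟨l', hl', hle⟩ := IH u ⟨p₂, hp₂⟩ (Or.inl ⟨p₁, hp₁⟩) huU.1
        refine ⟨l', hl', le_trans hle ?_⟩
        have hbiu : c i i * eW c p₁ ≤ b i u := hb.2.2.1 i u p₁ hp₁
        have hbiupos : 0 < b i u :=
          lt_of_lt_of_le (mul_pos (hcd i) (eW_pos hce p₁ hp₁.2.2.2)) hbiu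
        rw [div_mul_eq_mul_div, div_mul_eq_mul_div, div_le_div_iff₀ hbiupos hbilpos]
        have hxl : eW c p₂ * x u ≤ x l := eW_mul_le_x hx p₂ u l hp₂.2.1 hp₂.2.2.1 hp₂.2.2.2
        calc b i i * x u * b i l = b i i * (c i i * eW c p₁) * (eW c p₂ * x u) := by
              rw [hbil, hW]; ring
          _ ≤ b i i * b i u * x l := by
              refine mul_le_mul (mul_le_mul_right hbiu _) hxl zero_le zero_le
          _ = b i i * x l * b i u := by ring
  · refine ⟨l, ⟨Or.inr rfl, hU, fun q hq => absurd ⟨q, hq.1⟩ (hE l)⟩, le_rfl⟩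

end Claims

/-- Let `U ⊆ V`, `i ∈ V`, and `x` the recursive max-linear values on `𝒟` for
any `z`. Then `max_{j ∈ An(i) ∩ U} (b j i / b j j) * x j
= max_{j ∈ An_low^U(i)} (b j i / b j j) * x j` (empty max `0`), and
`min_{l ∈ De(i) ∩ U} (b i i / b i l) * x l = min_{l ∈ De_high^U(i)} (b i i / b i l) * x l`
(empty min `+∞`, taken in `ℝ≥0∞`). -/
theorem stmt17 {d : ℕ} (hd : 1 ≤ d) (E : Fin d → Fin d → Prop) (hE : Acyclic E)
    (c : Fin d → Fin d → ℝ≥0) (hcd : ∀ i, 0 < c i i) (hce : ∀ k i, E k i → 0 < c k i)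
    (b : Fin d → Fin d → ℝ≥0) (hb : IsMLMatrix E c b)
    (U : Set (Fin d)) (i : Fin d) (z x : Fin d → ℝ≥0) (hx : IsRecML E c z x) :
    ((Finset.univ.sup fun j =>
        if (anc E j i ∨ j = i) ∧ j ∈ U then (b j i / b j j) * x j else 0) =
      Finset.univ.sup fun j =>
        if j ∈ AnLow E c b U i then (b j i / b j j) * x j else 0) ∧
    ((Finset.univ.inf fun l =>
        if (anc E i l ∨ l = i) ∧ l ∈ U then (((b i i / b i l) * x l : ℝ≥0) : ℝ≥0∞)
        else ⊤) =
      Finset.univ.inf fun l =>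
        if l ∈ DeHigh E c b U i then (((b i i / b i l) * x l : ℝ≥0) : ℝ≥0∞) else ⊤) := by
  constructor
  · apply le_antisymm
    · refine Finset.sup_le fun j _ => ?_
      split_ifs with h
      · obtain ⟨j', hj', hle⟩ := claim1 hE hcd hce hb U i hx j h.1 h.2
        refine le_trans hle (le_trans ?_ (Finset.le_sup (Finset.mem_univ j')))
        rw [if_pos hj']
      · exact zero_le
    · refine Finset.sup_le fun j _ => ?_
      split_ifs with h
      · refine le_trans ?_ (Finset.le_sup (Finset.mem_univ j))
        rw [if_pos ⟨h.1, h.2.1⟩]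
      · exact zero_le
  · apply le_antisymm
    · refine Finset.le_inf fun l _ => ?_
      split_ifs with h
      · refine le_trans (Finset.inf_le (Finset.mem_univ l)) ?_
        rw [if_pos ⟨h.1, h.2.1⟩]
      · exact le_top
    · refine Finset.le_inf fun l _ => ?_
      split_ifs with h
      · obtain ⟨l', hl', hle⟩ := claim2 hE hcd hce hb U i hx l h.1 h.2
        refine le_trans (Finset.inf_le (Finset.mem_univ l')) ?_
        rw [if_pos hl']
        exact_mod_cast hle
      · exact le_top
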